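/- Let Λ : ℂ^{d×d} → ℂ^{d×d} be a positive trace-preserving linear map with Λ(ω) ≥ (Tr[ω]/(Nd)) 𝟙 for all ω ≥ 0 and ‖Λ‖_{∞→∞} ≤ 1. Then for 1 ≤ p ≤ q ≤ ∞, the projective Hilbert distance between 𝟙 and S(𝟙) = Λ*(Λ(𝟙)^{p−1})^{1/(q−1)} satisfies d_H(𝟙, S(𝟙)) ≤ ((p−1)/(q−1)) log N ≤ log N. -/

import Mathlib

open scoped BigOperators ENNReal Kronecker ComplexOrder
open Matrix

noncomputable section

/-- The Schatten `p`-norm of a (possibly rectangular) complex matrix, defined via the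
eigenvalues of `Xᴴ * X` (squares of the singular values); `p = ∞` gives the operator norm. -/
noncomputable def sNorm {a b : Type*} [Fintype a] [Fintype b] [DecidableEq b]
    (p : ℝ≥0∞) (X : Matrix a b ℂ) : ℝ :=
  if p = ∞ then ⨆ i, Real.sqrt (((Matrix.posSemidef_conjTranspose_mul_self X).1).eigenvalues i)
  else (∑ i, (((Matrix.posSemidef_conjTranspose_mul_self X).1).eigenvalues i) ^ (p.toReal / 2)) ^
    (1 / p.toReal)

/-- Real power of a matrix via the functional calculus on Hermitian matrices
(junk value `0` on non-Hermitian input). -/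
noncomputable def mpow {d : ℕ} (A : Matrix (Fin d) (Fin d) ℂ) (r : ℝ) :
    Matrix (Fin d) (Fin d) ℂ :=
  if hA : A.IsHermitian then
    (hA.eigenvectorUnitary : Matrix (Fin d) (Fin d) ℂ) *
      Matrix.diagonal (fun i => ((hA.eigenvalues i ^ r : ℝ) : ℂ)) *
      star (hA.eigenvectorUnitary : Matrix (Fin d) (Fin d) ℂ)
  else 0

/-- The vector `ℓ_p` norm on `ℂ^n`, `p = ∞` giving the max norm. -/
noncomputable def lpNorm {n : ℕ} (p : ℝ≥0∞) (v : Fin n → ℂ) : ℝ :=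
  if p = ∞ then ⨆ i, ‖v i‖
  else (∑ i, ‖v i‖ ^ p.toReal) ^ (1 / p.toReal)

/-- Mixed `ℓ_q → ℓ_p` norm of a matrix. -/
noncomputable def matMixedNorm {m n : ℕ} (q p : ℝ≥0∞) (A : Matrix (Fin m) (Fin n) ℂ) : ℝ :=
  ⨆ v : Fin n → ℂ, lpNorm p (A.mulVec v) / lpNorm q v

/-- Mixed Schatten `q → p` norm of a linear map between matrix spaces. -/
noncomputable def mapMixedNorm {n m : ℕ} (q p : ℝ≥0∞)
    (Φ : Matrix (Fin n) (Fin n) ℂ →ₗ[ℂ] Matrix (Fin m) (Fin m) ℂ) : ℝ :=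
  ⨆ X : Matrix (Fin n) (Fin n) ℂ, sNorm p (Φ X) / sNorm q X

/-- Mixed Schatten `q → p` norm restricted to positive semidefinite inputs. -/
noncomputable def mapMixedNormPos {n m : ℕ} (q p : ℝ≥0∞)
    (Φ : Matrix (Fin n) (Fin n) ℂ →ₗ[ℂ] Matrix (Fin m) (Fin m) ℂ) : ℝ :=
  ⨆ X : {X : Matrix (Fin n) (Fin n) ℂ // X.PosSemidef}, sNorm p (Φ X.1) / sNorm q X.1

/-- The projective Hilbert metric between (positive definite) matrices. -/
noncomputable def dH {d : ℕ} (A B : Matrix (Fin d) (Fin d) ℂ) : ℝ :=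
  Real.log (sNorm ∞ (mpow A (-(1/2)) * B * mpow A (-(1/2)))) +
    Real.log (sNorm ∞ (mpow B (-(1/2)) * A * mpow B (-(1/2))))

/-- The Hilbert–Schmidt adjoint of a linear map between matrix spaces. -/
noncomputable def hsAdj {n m : ℕ}
    (Λ : Matrix (Fin n) (Fin n) ℂ →ₗ[ℂ] Matrix (Fin m) (Fin m) ℂ) :
    Matrix (Fin m) (Fin m) ℂ →ₗ[ℂ] Matrix (Fin n) (Fin n) ℂ where
  toFun H := Matrix.of fun i j => ((Λ (Matrix.single i j 1))ᴴ * H).trace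
  map_add' x y := by
    ext i j
    simp [Matrix.mul_add, Matrix.trace_add]
  map_smul' c x := by
    ext i j
    simp [Matrix.mul_smul, Matrix.trace_smul]

/-- Application of `id_k ⊗ Φ` to a matrix on `ℂ^k ⊗ ℂ^n`, acting blockwise. -/
def blockMap {n m : ℕ} (Φ : Matrix (Fin n) (Fin n) ℂ →ₗ[ℂ] Matrix (Fin m) (Fin m) ℂ) (k : ℕ)
    (M : Matrix (Fin k × Fin n) (Fin k × Fin n) ℂ) : Matrix (Fin k × Fin m) (Fin k × Fin m) ℂ :=
  Matrix.of fun x y => Φ (Matrix.of fun i j => M (x.1, i) (y.1, j)) x.2 y.2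

/-- Complete positivity of a linear map between matrix spaces. -/
def IsCP {n m : ℕ} (Φ : Matrix (Fin n) (Fin n) ℂ →ₗ[ℂ] Matrix (Fin m) (Fin m) ℂ) : Prop :=
  ∀ (k : ℕ) (M : Matrix (Fin k × Fin n) (Fin k × Fin n) ℂ),
    M.PosSemidef → (blockMap Φ k M).PosSemidef

/-- Partial trace over the second tensor factor. -/
def traceRight {a b : ℕ} (ρ : Matrix (Fin a × Fin b) (Fin a × Fin b) ℂ) :
    Matrix (Fin a) (Fin a) ℂ :=
  Matrix.of fun i j => ∑ k, ρ (i, k) (j, k)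

/-- Partial trace over the first tensor factor. -/
def traceLeft {a b : ℕ} (ρ : Matrix (Fin a × Fin b) (Fin a × Fin b) ℂ) :
    Matrix (Fin b) (Fin b) ℂ :=
  Matrix.of fun i j => ∑ k, ρ (k, i) (k, j)

/-- One step of the (quantum) Boyd iteration: `S(ω) = (Λ*( (Λ ω)^(p-1) ))^e`
where `e` plays the role of `1/(q-1)`. -/
noncomputable def boydS {d : ℕ} (Λ : Matrix (Fin d) (Fin d) ℂ →ₗ[ℂ] Matrix (Fin d) (Fin d) ℂ)
    (p e : ℝ) (ω : Matrix (Fin d) (Fin d) ℂ) : Matrix (Fin d) (Fin d) ℂ :=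
  mpow (hsAdj Λ (mpow (Λ ω) (p - 1))) e

section Helpers
open scoped ComplexOrder
variable {d : ℕ}
local notation "𝕄" => Matrix (Fin d) (Fin d) ℂ


def cdg (U : Matrix.unitaryGroup (Fin d) ℂ) (μ : Fin d → ℝ) : Matrix (Fin d) (Fin d) ℂ :=
  (U : 𝕄) * Matrix.diagonal (fun i => (μ i : ℂ)) * star (U : 𝕄)

lemma cdg_herm (U : Matrix.unitaryGroup (Fin d) ℂ) (μ : Fin d → ℝ) : (cdg U μ).IsHermitian := by
  unfold cdg Matrix.IsHermitian
  simp [Matrix.star_eq_conjTranspose, Matrix.conjTranspose_mul, Matrix.mul_assoc,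
    Matrix.diagonal_conjTranspose]
  congr 1
  simp [Matrix.diagonal, Pi.star_def]

lemma spectral (A : 𝕄) (hA : A.IsHermitian) :
    A = cdg hA.eigenvectorUnitary hA.eigenvalues := hA.spectral_theorem

lemma unconj (U : Matrix.unitaryGroup (Fin d) ℂ) (D : 𝕄) :
    star (U : 𝕄) * ((U : 𝕄) * D * star (U : 𝕄)) * (U : 𝕄) = D := by
  have h1 : star (U : 𝕄) * (U : 𝕄) = 1 := U.2.1
  simp only [← Matrix.mul_assoc]
  rw [h1, Matrix.one_mul, Matrix.mul_assoc, h1, Matrix.mul_one]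

lemma cdg_psd_iff [NeZero d] (U : Matrix.unitaryGroup (Fin d) ℂ) (μ : Fin d → ℝ) :
    (cdg U μ).PosSemidef ↔ ∀ i, 0 ≤ μ i := by
  constructor
  · intro h
    have h2 := h.mul_mul_conjTranspose_same (star (U : 𝕄))
    rw [show (star (U:𝕄))ᴴ = (U:𝕄) by simp [Matrix.star_eq_conjTranspose],
      show cdg U μ = (U : 𝕄) * Matrix.diagonal (fun i => (μ i : ℂ)) * star (U : 𝕄) from rfl,
      unconj U] at h2
    rw [Matrix.posSemidef_diagonal_iff] at h2
    intro i
    exact_mod_cast Complex.zero_le_real.mp (h2 i)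
  · intro h
    have : (Matrix.diagonal (fun i => (μ i : ℂ))).PosSemidef := by
      rw [Matrix.posSemidef_diagonal_iff]
      intro i; exact_mod_cast Complex.zero_le_real.mpr (h i)
    simpa [cdg, Matrix.star_eq_conjTranspose] using
      this.mul_mul_conjTranspose_same (U : 𝕄)

lemma cdg_sub (U : Matrix.unitaryGroup (Fin d) ℂ) (μ ν : Fin d → ℝ) :
    cdg U μ - cdg U ν = cdg U (μ - ν) := by
  unfold cdg
  have : Matrix.diagonal (fun i => ((μ - ν) i : ℂ))
      = Matrix.diagonal (fun i => (μ i : ℂ)) - Matrix.diagonal (fun i => (ν i : ℂ)) := by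
    rw [Matrix.diagonal_sub]; ext i j; simp
  rw [this, Matrix.mul_sub, Matrix.sub_mul]

lemma cdg_smul_one (U : Matrix.unitaryGroup (Fin d) ℂ) (c : ℝ) :
    cdg U (fun _ => c) = ((c : ℝ) : ℂ) • (1 : 𝕄) := by
  unfold cdg
  have h : Matrix.diagonal (fun _ : Fin d => ((c:ℝ) : ℂ)) = ((c:ℝ):ℂ) • (1 : 𝕄) := by
    ext i j
    by_cases hij : i = j <;> simp [Matrix.diagonal_apply, Matrix.one_apply, hij]
  rw [h, Matrix.mul_smul, Matrix.smul_mul]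
  congr 1
  rw [Matrix.mul_one]
  exact U.2.2

lemma cdg_mul (U : Matrix.unitaryGroup (Fin d) ℂ) (μ ν : Fin d → ℝ) :
    cdg U μ * cdg U ν = cdg U (fun i => μ i * ν i) := by
  unfold cdg
  have h1 : star (U : 𝕄) * (U : 𝕄) = 1 := U.2.1
  rw [show (U:𝕄) * Matrix.diagonal (fun i => (μ i:ℂ)) * star (U:𝕄) *
      ((U:𝕄) * Matrix.diagonal (fun i => (ν i:ℂ)) * star (U:𝕄))
      = (U:𝕄) * Matrix.diagonal (fun i => (μ i:ℂ)) * (star (U:𝕄) * (U:𝕄)) *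
        (Matrix.diagonal (fun i => (ν i:ℂ)) * star (U:𝕄)) by
    simp only [Matrix.mul_assoc], h1, Matrix.mul_one]
  rw [Matrix.mul_assoc ((U:𝕄)), ← Matrix.mul_assoc (Matrix.diagonal _),
    Matrix.diagonal_mul_diagonal, ← Matrix.mul_assoc]
  congr 2
  ext i; simp

lemma cdg_le_iff [NeZero d] (U : Matrix.unitaryGroup (Fin d) ℂ) (μ : Fin d → ℝ) (c : ℝ) :
    (((c:ℝ):ℂ) • (1 : 𝕄) - cdg U μ).PosSemidef ↔ ∀ i, μ i ≤ c := by
  rw [← cdg_smul_one U c, cdg_sub, cdg_psd_iff]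
  constructor <;> intro h i <;> have := h i <;> simp only [Pi.sub_apply] at * <;> linarith

lemma le_cdg_iff [NeZero d] (U : Matrix.unitaryGroup (Fin d) ℂ) (μ : Fin d → ℝ) (c : ℝ) :
    (cdg U μ - ((c:ℝ):ℂ) • (1 : 𝕄)).PosSemidef ↔ ∀ i, c ≤ μ i := by
  rw [← cdg_smul_one U c, cdg_sub, cdg_psd_iff]
  constructor <;> intro h i <;> have := h i <;> simp only [Pi.sub_apply] at * <;> linarith

lemma herm_le_iff [NeZero d] {A : 𝕄} (hA : A.IsHermitian) (c : ℝ) :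
    (((c:ℝ):ℂ) • (1 : 𝕄) - A).PosSemidef ↔ ∀ i, hA.eigenvalues i ≤ c := by
  conv_lhs => rw [spectral A hA]
  exact cdg_le_iff _ _ c

lemma herm_ge_iff [NeZero d] {A : 𝕄} (hA : A.IsHermitian) (c : ℝ) :
    (A - ((c:ℝ):ℂ) • (1 : 𝕄)).PosSemidef ↔ ∀ i, c ≤ hA.eigenvalues i := by
  conv_lhs => rw [spectral A hA]
  exact le_cdg_iff _ _ c

lemma psd_entry_diag_nonneg {M : 𝕄} (h : M.PosSemidef) (i : Fin d) : 0 ≤ M i i := by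
  have := h.dotProduct_mulVec_nonneg (Pi.single i 1)
  simpa [dotProduct, Matrix.mulVec, Pi.single_apply, Finset.sum_ite_eq,
    Finset.sum_ite_eq', mul_comm] using this

lemma sNorm_inf_eq (X : 𝕄) : sNorm ∞ X =
    ⨆ i, Real.sqrt ((Matrix.posSemidef_conjTranspose_mul_self X).1.eigenvalues i) := if_pos rfl

lemma sNorm_inf_nonneg [NeZero d] (X : 𝕄) : 0 ≤ sNorm ∞ X := by
  rw [sNorm_inf_eq]
  exact Real.iSup_nonneg fun i => Real.sqrt_nonneg _

lemma sqrt_eig_le_sNorm (X : 𝕄) (i : Fin d) :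
    Real.sqrt ((Matrix.posSemidef_conjTranspose_mul_self X).1.eigenvalues i) ≤ sNorm ∞ X := by
  rw [sNorm_inf_eq]
  exact le_ciSup (f := fun i => Real.sqrt
    ((Matrix.posSemidef_conjTranspose_mul_self X).1.eigenvalues i))
    (Set.Finite.bddAbove (Set.finite_range _)) i

lemma sNorm_inf_le_iff [NeZero d] (X : 𝕄) {c : ℝ} (hc : 0 ≤ c) :
    sNorm ∞ X ≤ c ↔ (((c^2 : ℝ) : ℂ) • (1 : 𝕄) - Xᴴ * X).PosSemidef := by
  rw [herm_le_iff (Matrix.posSemidef_conjTranspose_mul_self X).1 (c^2)]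
  constructor
  · intro h i
    have h1 := sqrt_eig_le_sNorm X i
    have h2 := (Matrix.posSemidef_conjTranspose_mul_self X).eigenvalues_nonneg i
    nlinarith [Real.sq_sqrt h2, Real.sqrt_nonneg
      ((Matrix.posSemidef_conjTranspose_mul_self X).1.eigenvalues i)]
  · intro h
    rw [sNorm_inf_eq]
    apply ciSup_le
    intro i
    calc Real.sqrt ((Matrix.posSemidef_conjTranspose_mul_self X).1.eigenvalues i)
        ≤ Real.sqrt (c^2) := Real.sqrt_le_sqrt (h i)
      _ = c := by rw [Real.sqrt_sq hc]

lemma entry_abs_le_sNorm [NeZero d] (X : 𝕄) (i j : Fin d) :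
    ‖X i j‖ ≤ sNorm ∞ X := by
  have hs := sNorm_inf_nonneg X
  have hpsd := (sNorm_inf_le_iff X hs).mp le_rfl
  have hXX : ((Xᴴ * X) j j) = ((∑ k, Complex.normSq (X k j) : ℝ) : ℂ) := by
    rw [Matrix.mul_apply]
    push_cast
    refine Finset.sum_congr rfl fun k _ => ?_
    rw [Matrix.conjTranspose_apply, Complex.star_def, ← Complex.normSq_eq_conj_mul_self]
  have hdd := psd_entry_diag_nonneg hpsd j
  rw [Matrix.sub_apply, Matrix.smul_apply, Matrix.one_apply_eq, smul_eq_mul, mul_one, hXX,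
    ← Complex.ofReal_sub] at hdd
  have hR : 0 ≤ (sNorm ∞ X)^2 - ∑ k, Complex.normSq (X k j) := Complex.zero_le_real.mp hdd
  have h1 : Complex.normSq (X i j) ≤ ∑ k, Complex.normSq (X k j) :=
    Finset.single_le_sum (f := fun k => Complex.normSq (X k j))
      (fun k _ => Complex.normSq_nonneg _) (Finset.mem_univ i)
  have h4 := Complex.sq_norm (X i j)
  nlinarith [norm_nonneg (X i j)]

lemma trace_eq_sum_eig {A : 𝕄} (hA : A.IsHermitian) :
    A.trace = ((∑ i, hA.eigenvalues i : ℝ) : ℂ) := by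
  conv_lhs => rw [spectral A hA, cdg]
  rw [Matrix.trace_mul_cycle]
  rw [show star (hA.eigenvectorUnitary : 𝕄) * (hA.eigenvectorUnitary : 𝕄) = 1 from
    hA.eigenvectorUnitary.2.1]
  rw [Matrix.one_mul, Matrix.trace_diagonal]
  push_cast
  rfl

set_option maxHeartbeats 1000000 in
lemma sNorm_le_sum_abs [NeZero d] (X : 𝕄) :
    sNorm ∞ X ≤ ∑ i, ∑ j, ‖X i j‖ := by
  set T := ∑ i, ∑ j, ‖X i j‖ with hT
  have hT0 : 0 ≤ T := Finset.sum_nonneg fun i _ =>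
    Finset.sum_nonneg fun j _ => norm_nonneg _
  rw [sNorm_inf_eq]
  apply ciSup_le
  intro i
  have hsum : (∑ k, (Matrix.posSemidef_conjTranspose_mul_self X).1.eigenvalues k)
      = ∑ j, ∑ k, Complex.normSq (X k j) := by
    have := trace_eq_sum_eig (Matrix.posSemidef_conjTranspose_mul_self X).1
    have htr : (Xᴴ * X).trace = ((∑ j, ∑ k, Complex.normSq (X k j) : ℝ) : ℂ) := by
      rw [Matrix.trace]
      push_cast
      congr 1; ext j
      rw [Matrix.diag_apply, Matrix.mul_apply]
      refine Finset.sum_congr rfl fun k _ => ?_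
      rw [Matrix.conjTranspose_apply, Complex.star_def, ← Complex.normSq_eq_conj_mul_self]
    rw [htr] at this
    exact_mod_cast (Complex.ofReal_inj.mp this).symm
  have h1 : (Matrix.posSemidef_conjTranspose_mul_self X).1.eigenvalues i
      ≤ ∑ j, ∑ k, Complex.normSq (X k j) := by
    rw [← hsum]
    exact Finset.single_le_sum
      (fun k _ => (Matrix.posSemidef_conjTranspose_mul_self X).eigenvalues_nonneg k)
      (Finset.mem_univ i)
  have h2 : ∑ j, ∑ k, Complex.normSq (X k j) ≤ T^2 := by
    have hterm : ∀ j k, Complex.normSq (X k j) ≤ ‖X k j‖ * T := by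
      intro j k
      rw [← Complex.sq_norm, sq]
      apply mul_le_mul_of_nonneg_left _ (norm_nonneg _)
      calc ‖X k j‖ ≤ ∑ j', ‖X k j'‖ :=
            Finset.single_le_sum (f := fun j' => ‖X k j'‖)
              (fun j' _ => norm_nonneg _) (Finset.mem_univ j)
        _ ≤ T := by
            rw [hT]
            exact Finset.single_le_sum (f := fun k' => ∑ j', ‖X k' j'‖)
              (fun k' _ => Finset.sum_nonneg fun j' _ => norm_nonneg _)
              (Finset.mem_univ k)
    calc ∑ j, ∑ k, Complex.normSq (X k j) ≤ ∑ j, ∑ k, ‖X k j‖ * T :=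
          Finset.sum_le_sum fun j _ => Finset.sum_le_sum fun k _ => hterm j k
      _ = (∑ j, ∑ k, ‖X k j‖) * T := by
          rw [Finset.sum_mul]
          exact Finset.sum_congr rfl fun j _ => (Finset.sum_mul _ _ _).symm
      _ = T * T := by rw [hT, Finset.sum_comm]
      _ = T^2 := (sq T).symm
  calc Real.sqrt ((Matrix.posSemidef_conjTranspose_mul_self X).1.eigenvalues i)
      ≤ Real.sqrt (T^2) := Real.sqrt_le_sqrt (le_trans h1 h2)
    _ = T := Real.sqrt_sq hT0

lemma sNorm_one [NeZero d] : sNorm ∞ (1 : 𝕄) = 1 := by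
  apply le_antisymm
  · rw [sNorm_inf_le_iff (1 : 𝕄) (zero_le_one)]
    have : (((1:ℝ)^2 : ℝ) : ℂ) • (1 : 𝕄) - (1:𝕄)ᴴ * 1 = 0 := by
      norm_num
    rw [this]
    exact Matrix.PosSemidef.zero
  · have := entry_abs_le_sNorm (1 : 𝕄) ⟨0, Nat.pos_of_ne_zero (NeZero.ne d)⟩
      ⟨0, Nat.pos_of_ne_zero (NeZero.ne d)⟩
    simpa using this

lemma mpow_eq {A : 𝕄} (hA : A.IsHermitian) (r : ℝ) :
    mpow A r = cdg hA.eigenvectorUnitary (fun i => hA.eigenvalues i ^ r) := by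
  unfold mpow
  rw [dif_pos hA]
  rfl

lemma herm_decomp [NeZero d] {A : 𝕄} (hA : A.IsHermitian) :
    ∃ P Q : 𝕄, P.PosSemidef ∧ Q.PosSemidef ∧ A = P - Q := by
  refine ⟨cdg hA.eigenvectorUnitary (fun i => max (hA.eigenvalues i) 0),
    cdg hA.eigenvectorUnitary (fun i => max (-(hA.eigenvalues i)) 0), ?_, ?_, ?_⟩
  · exact (cdg_psd_iff _ _).mpr fun i => le_max_right _ _
  · exact (cdg_psd_iff _ _).mpr fun i => le_max_right _ _
  · rw [cdg_sub]
    have hfun : (fun i => max (hA.eigenvalues i) 0) - (fun i => max (-(hA.eigenvalues i)) 0)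
        = hA.eigenvalues := by
      funext i
      show max (hA.eigenvalues i) 0 - max (-(hA.eigenvalues i)) 0 = hA.eigenvalues i
      rcases le_total (hA.eigenvalues i) 0 with h | h
      · rw [max_eq_right h, max_eq_left (by linarith)]; ring
      · rw [max_eq_left h, max_eq_right (by linarith)]; ring
    rw [hfun]
    exact spectral A hA

variable (Λ : Matrix (Fin d) (Fin d) ℂ →ₗ[ℂ] Matrix (Fin d) (Fin d) ℂ)

lemma lam_herm [NeZero d] (hpos : ∀ X : 𝕄, X.PosSemidef → (Λ X).PosSemidef)
    {H : 𝕄} (hH : H.IsHermitian) : (Λ H).IsHermitian := by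
  obtain ⟨P, Q, hP, hQ, rfl⟩ := herm_decomp hH
  rw [map_sub]
  exact ((hpos P hP).1).sub ((hpos Q hQ).1)

lemma lam_conjT [NeZero d] (hpos : ∀ X : 𝕄, X.PosSemidef → (Λ X).PosSemidef)
    (X : 𝕄) : Λ Xᴴ = (Λ X)ᴴ := by
  set c1 : ℂ := ((2⁻¹ : ℝ) : ℂ) with hc1
  set c2 : ℂ := -Complex.I * ((2⁻¹ : ℝ) : ℂ) with hc2
  have hsc1 : star c1 = c1 := by
    rw [hc1]; exact Complex.conj_ofReal _
  have hsc2 : star c2 = -c2 := by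
    rw [hc2]; simp [Complex.star_def, _root_.map_mul, Complex.conj_I, Complex.conj_ofReal]
  obtain ⟨H1, hH1def⟩ : ∃ M : 𝕄, M = c1 • (X + Xᴴ) := ⟨_, rfl⟩
  obtain ⟨H2, hH2def⟩ : ∃ M : 𝕄, M = c2 • (X - Xᴴ) := ⟨_, rfl⟩
  have hH1 : H1.IsHermitian := by
    rw [hH1def]
    unfold Matrix.IsHermitian
    rw [Matrix.conjTranspose_smul, Matrix.conjTranspose_add, Matrix.conjTranspose_conjTranspose,
      hsc1, add_comm]
  have hH2 : H2.IsHermitian := by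
    rw [hH2def]
    unfold Matrix.IsHermitian
    rw [Matrix.conjTranspose_smul, Matrix.conjTranspose_sub, Matrix.conjTranspose_conjTranspose,
      hsc2, ← neg_sub X Xᴴ, smul_neg, neg_smul, neg_neg]
  have hI2 : Complex.I * c2 = c1 := by
    rw [hc2, hc1, show Complex.I * (-Complex.I * ((2⁻¹:ℝ):ℂ)) =
      -(Complex.I * Complex.I) * ((2⁻¹:ℝ):ℂ) by ring, Complex.I_mul_I]
    norm_num
  have hX : X = H1 + Complex.I • H2 := by
    rw [hH1def, hH2def, smul_smul, hI2, smul_add, smul_sub, hc1]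
    push_cast
    module
  have hXc : Xᴴ = H1 - Complex.I • H2 := by
    rw [hH1def, hH2def, smul_smul, hI2, smul_add, smul_sub, hc1]
    push_cast
    module
  calc Λ Xᴴ = Λ H1 - Complex.I • Λ H2 := by rw [hXc, map_sub, _root_.map_smul]
    _ = (Λ H1)ᴴ - Complex.I • (Λ H2)ᴴ := by
        rw [lam_herm Λ hpos hH1, lam_herm Λ hpos hH2]
    _ = (Λ H1 + Complex.I • Λ H2)ᴴ := by
        rw [Matrix.conjTranspose_add, Matrix.conjTranspose_smul,
          show star Complex.I = -Complex.I from Complex.conj_I, neg_smul, ← sub_eq_add_neg]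
    _ = (Λ X)ᴴ := by rw [← _root_.map_smul, ← map_add, ← hX]

lemma vecMulVec_psd (x : Fin d → ℂ) : (Matrix.vecMulVec x (star x)).PosSemidef := by
  apply Matrix.PosSemidef.of_dotProduct_mulVec_nonneg
  · unfold Matrix.IsHermitian
    ext i j
    simp [Matrix.vecMulVec_apply, Matrix.conjTranspose_apply, mul_comm]
  · intro y
    set c : ℂ := dotProduct (star x) y with hc
    have hmv : Matrix.vecMulVec x (star x) *ᵥ y = c • x := by
      ext i
      rw [hc]
      simp only [Matrix.mulVec, dotProduct, Matrix.vecMulVec_apply, Pi.smul_apply,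
        Pi.star_apply, smul_eq_mul, Finset.sum_mul, Finset.mul_sum]
      exact Finset.sum_congr rfl fun j _ => by ring
    rw [hmv]
    have h1 : dotProduct (star y) (c • x) = c * dotProduct (star y) x := by
      simp only [dotProduct, Pi.smul_apply, Pi.star_apply, smul_eq_mul, Finset.mul_sum]
      exact Finset.sum_congr rfl fun i _ => by ring
    have h2 : dotProduct (star y) x = star c := by
      rw [hc]
      simp only [dotProduct, star_sum, star_mul', star_star, Pi.star_apply]
      exact Finset.sum_congr rfl fun i _ => by ring
    rw [h1, h2]
    exact mul_star_self_nonneg c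

lemma psd_trace_nonneg {M : 𝕄} (h : M.PosSemidef) : 0 ≤ M.trace := by
  rw [Matrix.trace]
  exact Finset.sum_nonneg fun i _ => psd_entry_diag_nonneg h i

lemma trace_psd_mul_nonneg {A B : 𝕄} (hA : A.PosSemidef) (hB : B.PosSemidef) :
    0 ≤ (A * B).trace := by
  obtain ⟨C, rfl⟩ : ∃ C : 𝕄, B = Cᴴ * C := by
    classical
    open scoped MatrixOrder Matrix.Norms.L2Operator in
    obtain ⟨C, hC⟩ := CStarAlgebra.nonneg_iff_eq_star_mul_self.mp hB.nonneg
    exact ⟨C, hC⟩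
  rw [show A * (Cᴴ * C) = A * Cᴴ * C by rw [Matrix.mul_assoc], Matrix.trace_mul_cycle]
  exact psd_trace_nonneg (hA.mul_mul_conjTranspose_same C)

lemma stdBasis_conjT (i j : Fin d) :
    (Matrix.single i j (1:ℂ))ᴴ = Matrix.single j i (1:ℂ) := by
  ext a b
  simp only [Matrix.conjTranspose_apply, Matrix.single_apply]
  by_cases h1 : j = a <;> by_cases h2 : i = b <;> simp [h1, h2, and_comm]

lemma hsAdj_apply (H : 𝕄) (i j : Fin d) :
    hsAdj Λ H i j = ((Λ (Matrix.single i j 1))ᴴ * H).trace := rfl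

lemma hsAdj_quadform (H : 𝕄) (x : Fin d → ℂ) :
    dotProduct (star x) ((hsAdj Λ H) *ᵥ x)
      = ((Λ (Matrix.vecMulVec x (star x)))ᴴ * H).trace := by
  have hM : Matrix.vecMulVec x (star x)
      = ∑ i, ∑ j, (x i * star (x j)) • Matrix.single i j (1:ℂ) := by
    conv_lhs => rw [Matrix.matrix_eq_sum_single (Matrix.vecMulVec x (star x))]
    refine Finset.sum_congr rfl fun i _ => Finset.sum_congr rfl fun j _ => ?_
    rw [Matrix.smul_single, Matrix.vecMulVec_apply, smul_eq_mul, mul_one]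
    rfl
  rw [hM, map_sum]
  simp only [map_sum, _root_.map_smul, Matrix.conjTranspose_sum, Matrix.conjTranspose_smul,
    Matrix.sum_mul, Matrix.smul_mul, Matrix.trace_sum, Matrix.trace_smul]
  simp only [dotProduct, Matrix.mulVec, Pi.star_apply, Finset.mul_sum]
  refine Finset.sum_congr rfl fun i _ => Finset.sum_congr rfl fun j _ => ?_
  rw [hsAdj_apply]
  simp only [smul_eq_mul, star_mul', star_star]
  ring

lemma hsAdj_herm [NeZero d] (hpos : ∀ X : 𝕄, X.PosSemidef → (Λ X).PosSemidef)
    {H : 𝕄} (hH : H.IsHermitian) : (hsAdj Λ H).IsHermitian := by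
  unfold Matrix.IsHermitian
  ext i j
  rw [Matrix.conjTranspose_apply, hsAdj_apply, hsAdj_apply]
  rw [show star (((Λ (Matrix.single j i 1))ᴴ * H).trace)
      = (((Λ (Matrix.single j i 1))ᴴ * H)ᴴ).trace from (Matrix.trace_conjTranspose _).symm]
  rw [Matrix.conjTranspose_mul, Matrix.conjTranspose_conjTranspose, hH.eq]
  rw [← lam_conjT Λ hpos, stdBasis_conjT]
  rw [Matrix.trace_mul_comm]

lemma hsAdj_psd [NeZero d] (hpos : ∀ X : 𝕄, X.PosSemidef → (Λ X).PosSemidef)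
    {H : 𝕄} (hH : H.PosSemidef) : (hsAdj Λ H).PosSemidef := by
  refine Matrix.PosSemidef.of_dotProduct_mulVec_nonneg (hsAdj_herm Λ hpos hH.1) fun x => ?_
  rw [hsAdj_quadform]
  have hMpsd := vecMulVec_psd x
  have hLM := hpos _ hMpsd
  rw [show (Λ (Matrix.vecMulVec x (star x)))ᴴ = Λ (Matrix.vecMulVec x (star x)) from hLM.1]
  exact trace_psd_mul_nonneg hLM hH

lemma hsAdj_one (hTP : ∀ X, (Λ X).trace = X.trace) : hsAdj Λ (1 : 𝕄) = 1 := by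
  ext i j
  rw [hsAdj_apply, Matrix.mul_one, Matrix.trace_conjTranspose, hTP]
  have : (Matrix.single i j (1:ℂ)).trace = if i = j then 1 else 0 := by
    rw [Matrix.trace]
    by_cases h : i = j
    · subst h
      simp [Matrix.diag_apply, Matrix.single_apply]
    · have : ∀ k : Fin d, (Matrix.single i j (1:ℂ)).diag k = 0 := by
        intro k
        simp only [Matrix.diag_apply, Matrix.single_apply]
        by_cases h1 : i = k
        · subst h1; simp [h, Ne.symm h]
        · simp [h1]
      rw [if_neg h]
      exact Finset.sum_eq_zero fun k _ => this k
  rw [this]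
  by_cases h : i = j
  · subst h; simp [Matrix.one_apply]
  · simp [h, Matrix.one_apply, Ne.symm h]

lemma hsAdj_mono [NeZero d] (hpos : ∀ X : 𝕄, X.PosSemidef → (Λ X).PosSemidef)
    {H K : 𝕄} (h : (H - K).PosSemidef) : (hsAdj Λ H - hsAdj Λ K).PosSemidef := by
  rw [← map_sub]
  exact hsAdj_psd Λ hpos h
end Helpers

/-- bound on the initial Hilbert-metric distance `d_H(𝟙, S(𝟙))` of the Boyd
iteration for a positivity improving, trace preserving positive map. -/
theorem boyd_initial_distance_bound
    {d : ℕ} (hd : 0 < d) (N : ℝ) (hN : 0 < N)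
    (Λ : Matrix (Fin d) (Fin d) ℂ →ₗ[ℂ] Matrix (Fin d) (Fin d) ℂ)
    (hpos : ∀ X : Matrix (Fin d) (Fin d) ℂ, X.PosSemidef → (Λ X).PosSemidef)
    (himp : ∀ ω : Matrix (Fin d) (Fin d) ℂ, ω.PosSemidef →
      (Λ ω - (ω.trace / (((N : ℝ) : ℂ) * (d : ℂ))) • 1).PosSemidef)
    (hnorm : mapMixedNorm ∞ ∞ Λ ≤ 1)
    (hTP : ∀ X, (Λ X).trace = X.trace)
    (p : ℝ) (q : ℝ≥0∞) (hp : 1 ≤ p) (hpq : ENNReal.ofReal p ≤ q) :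
    dH 1 (boydS Λ p ((1/(q-1)).toReal) 1) ≤ (p - 1) * (1/(q-1)).toReal * Real.log N ∧
    (p - 1) * (1/(q-1)).toReal * Real.log N ≤ Real.log N := by
  haveI : NeZero d := ⟨hd.ne'⟩
  set e : ℝ := ((1 : ℝ≥0∞)/(q-1)).toReal with he
  have he0 : (0:ℝ) ≤ e := ENNReal.toReal_nonneg
  have hp1 : (0:ℝ) ≤ p - 1 := by linarith
  have ht0 : (0:ℝ) ≤ (p - 1) * e := mul_nonneg hp1 he0
  have ht1 : (p - 1) * e ≤ 1 := by
    rcases eq_or_ne q ⊤ with hq | hq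
    · have : e = 0 := by rw [he, hq]; simp
      rw [this, mul_zero]; exact zero_le_one
    · rcases le_or_gt q 1 with hq1 | hq1
      · have hple : p ≤ 1 := ENNReal.ofReal_le_one.mp (hpq.trans hq1)
        have : p = 1 := le_antisymm hple hp
        rw [this]; simp
      · have hq0 : q - 1 ≠ 0 := by
          rw [Ne, tsub_eq_zero_iff_le]
          exact not_le.mpr hq1
        have hqtop : q - 1 ≠ ⊤ := ENNReal.sub_ne_top hq
        have heq : e = ((q - 1).toReal)⁻¹ := by
          rw [he, one_div, ENNReal.toReal_inv]
        have hsub : (q - 1).toReal = q.toReal - 1 := by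
          rw [ENNReal.toReal_sub_of_le hq1.le hq]
          simp
        have hqr : 1 < q.toReal := by
          have := (ENNReal.toReal_lt_toReal (by simp) hq).mpr hq1
          simpa using this
        have hpq' : p ≤ q.toReal := by
          rw [← ENNReal.ofReal_le_iff_le_toReal hq]
          exact hpq
        rw [heq, hsub, ← div_eq_mul_inv]
        exact (div_le_one (by linarith)).mpr (by linarith)
  have one_psd : (1 : Matrix (Fin d) (Fin d) ℂ).PosSemidef := Matrix.PosSemidef.one
  have hApsd := hpos 1 one_psd
  have hAh := hApsd.1
  -- lower bound on Λ 1
  have hdc : ((d:ℕ):ℂ) ≠ 0 := Nat.cast_ne_zero.mpr hd.ne'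
  have hNC : ((N:ℝ):ℂ) ≠ 0 := by
    simpa using Complex.ofReal_ne_zero.mpr hN.ne'
  have hscal : (Matrix.trace (1 : Matrix (Fin d) (Fin d) ℂ)) / (((N : ℝ) : ℂ) * (d : ℂ))
      = ((N⁻¹ : ℝ) : ℂ) := by
    rw [Matrix.trace_one]
    push_cast
    field_simp
    simp
  have hAlow' := himp 1 one_psd
  rw [hscal] at hAlow'
  have hAlow : ∀ i, N⁻¹ ≤ hAh.eigenvalues i := (herm_ge_iff hAh N⁻¹).mp hAlow'
  -- upper bound via hnorm
  set C : ℝ := ∑ i, ∑ j, ∑ k, ∑ l, ‖(Λ (Matrix.single k l 1)) i j‖ with hC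
  have hC0 : 0 ≤ C :=
    Finset.sum_nonneg fun _ _ => Finset.sum_nonneg fun _ _ =>
      Finset.sum_nonneg fun _ _ => Finset.sum_nonneg fun _ _ => norm_nonneg _
  have hXexp : ∀ (X : Matrix (Fin d) (Fin d) ℂ) (i j : Fin d),
      (Λ X) i j = ∑ k, ∑ l, X k l * (Λ (Matrix.single k l 1)) i j := by
    intro X i j
    have hXsum : X = ∑ k, ∑ l, X k l • Matrix.single k l (1:ℂ) := by
      conv_lhs => rw [Matrix.matrix_eq_sum_single X]
      refine Finset.sum_congr rfl fun k _ => Finset.sum_congr rfl fun l _ => ?_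
      rw [Matrix.smul_single, smul_eq_mul, mul_one]
    conv_lhs => rw [hXsum]
    rw [map_sum]
    simp only [map_sum, _root_.map_smul, Matrix.sum_apply, Matrix.smul_apply, smul_eq_mul]
  have hbound : ∀ X : Matrix (Fin d) (Fin d) ℂ, sNorm ∞ (Λ X) ≤ C * sNorm ∞ X := by
    intro X
    refine (sNorm_le_sum_abs (Λ X)).trans ?_
    have hentry : ∀ i j : Fin d, ‖(Λ X) i j‖
        ≤ (∑ k, ∑ l, ‖(Λ (Matrix.single k l 1)) i j‖) * sNorm ∞ X := by
      intro i j
      rw [hXexp X i j]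
      calc ‖∑ k, ∑ l, X k l * (Λ (Matrix.single k l 1)) i j‖
          ≤ ∑ k, ‖∑ l, X k l * (Λ (Matrix.single k l 1)) i j‖ :=
            norm_sum_le _ _
        _ ≤ ∑ k, ∑ l, ‖X k l * (Λ (Matrix.single k l 1)) i j‖ :=
            Finset.sum_le_sum fun k _ => norm_sum_le _ _
        _ ≤ ∑ k, ∑ l, ‖(Λ (Matrix.single k l 1)) i j‖ * sNorm ∞ X := by
            refine Finset.sum_le_sum fun k _ => Finset.sum_le_sum fun l _ => ?_
            rw [norm_mul, mul_comm]
            exact mul_le_mul_of_nonneg_left (entry_abs_le_sNorm X k l) (norm_nonneg _)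
        _ = (∑ k, ∑ l, ‖(Λ (Matrix.single k l 1)) i j‖) * sNorm ∞ X := by
            rw [Finset.sum_mul]
            exact Finset.sum_congr rfl fun k _ => (Finset.sum_mul _ _ _).symm
    calc ∑ i, ∑ j, ‖(Λ X) i j‖
        ≤ ∑ i, ∑ j, (∑ k, ∑ l, ‖(Λ (Matrix.single k l 1)) i j‖) * sNorm ∞ X :=
          Finset.sum_le_sum fun i _ => Finset.sum_le_sum fun j _ => hentry i j
      _ = C * sNorm ∞ X := by
          rw [hC, Finset.sum_mul]
          refine Finset.sum_congr rfl fun i _ => ?_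
          rw [Finset.sum_mul]
  have hfam : ∀ X : Matrix (Fin d) (Fin d) ℂ, sNorm ∞ (Λ X) / sNorm ∞ X ≤ C := by
    intro X
    rcases (sNorm_inf_nonneg X).eq_or_lt with h0 | h0
    · rw [← h0, div_zero]; exact hC0
    · rw [div_le_iff₀ h0]; exact hbound X
  have hbdd : BddAbove (Set.range fun X : Matrix (Fin d) (Fin d) ℂ =>
      sNorm ∞ (Λ X) / sNorm ∞ X) := by
    refine ⟨C, fun y hy => ?_⟩
    obtain ⟨X, rfl⟩ := hy
    exact hfam X
  have hsup : sNorm ∞ (Λ 1) ≤ 1 := by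
    have h1 := le_ciSup hbdd (1 : Matrix (Fin d) (Fin d) ℂ)
    unfold mapMixedNorm at hnorm
    have h2 := h1.trans hnorm
    rwa [sNorm_one, div_one] at h2
  have hAA : Λ 1 * Λ 1
      = cdg hAh.eigenvectorUnitary (fun i => hAh.eigenvalues i * hAh.eigenvalues i) := by
    conv_lhs => rw [spectral _ hAh]
    rw [cdg_mul]
  have hup' := (sNorm_inf_le_iff (Λ 1) zero_le_one).mp hsup
  rw [show (Λ (1 : Matrix (Fin d) (Fin d) ℂ))ᴴ = Λ 1 from hAh, hAA] at hup'
  have hAup : ∀ i, hAh.eigenvalues i ≤ 1 := by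
    intro i
    have h2 := (cdg_le_iff _ _ ((1:ℝ)^2)).mp hup' i
    have h3 := hApsd.eigenvalues_nonneg i
    nlinarith
  have hN1 : 1 ≤ N := by
    have i0 : Fin d := ⟨0, hd⟩
    have h1 := (hAlow i0).trans (hAup i0)
    have hNN : N * N⁻¹ = 1 := mul_inv_cancel₀ hN.ne'
    nlinarith
  have hlogN : 0 ≤ Real.log N := Real.log_nonneg hN1
  -- the matrix B = (Λ 1)^(p-1)
  set a : ℝ := N⁻¹ ^ (p - 1) with ha
  have ha0 : 0 < a := Real.rpow_pos_of_pos (inv_pos.mpr hN) _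
  have hB : mpow (Λ 1) (p - 1)
      = cdg hAh.eigenvectorUnitary (fun i => hAh.eigenvalues i ^ (p-1)) := mpow_eq hAh (p-1)
  have hBlow : (mpow (Λ 1) (p-1) - ((a:ℝ):ℂ) • 1).PosSemidef := by
    rw [hB]
    exact (le_cdg_iff _ _ a).mpr fun i =>
      Real.rpow_le_rpow (inv_nonneg.mpr hN.le) (hAlow i) hp1
  have hBup : (((1:ℝ):ℂ) • 1 - mpow (Λ 1) (p-1)).PosSemidef := by
    rw [hB]
    exact (cdg_le_iff _ _ 1).mpr fun i =>
      Real.rpow_le_one (le_trans (inv_nonneg.mpr hN.le) (hAlow i)) (hAup i) hp1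
  have hBpsd : (mpow (Λ 1) (p-1)).PosSemidef := by
    rw [hB]
    exact (cdg_psd_iff _ _).mpr fun i =>
      Real.rpow_nonneg (le_trans (inv_nonneg.mpr hN.le) (hAlow i)) _
  -- S' = Λ*(B)
  have hS'low : (hsAdj Λ (mpow (Λ 1) (p-1)) - ((a:ℝ):ℂ) • 1).PosSemidef := by
    have h1 := hsAdj_mono Λ hpos hBlow
    rwa [_root_.map_smul, hsAdj_one Λ hTP] at h1
  have hS'up : (((1:ℝ):ℂ) • 1 - hsAdj Λ (mpow (Λ 1) (p-1))).PosSemidef := by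
    have h1 := hsAdj_mono Λ hpos hBup
    rwa [_root_.map_smul, hsAdj_one Λ hTP] at h1
  have hS'psd := hsAdj_psd Λ hpos hBpsd
  have hS'h := hS'psd.1
  have hνlow : ∀ i, a ≤ hS'h.eigenvalues i := (herm_ge_iff hS'h a).mp hS'low
  have hνup : ∀ i, hS'h.eigenvalues i ≤ 1 := (herm_le_iff hS'h 1).mp hS'up
  -- S = S'^e
  have hSeq : boydS Λ p e 1
      = cdg hS'h.eigenvectorUnitary (fun i => hS'h.eigenvalues i ^ e) := mpow_eq hS'h e
  have hκlow : ∀ i, a ^ e ≤ hS'h.eigenvalues i ^ e :=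
    fun i => Real.rpow_le_rpow ha0.le (hνlow i) he0
  have hκup : ∀ i, hS'h.eigenvalues i ^ e ≤ 1 :=
    fun i => Real.rpow_le_one (le_trans ha0.le (hνlow i)) (hνup i) he0
  have hae0 : 0 < a ^ e := Real.rpow_pos_of_pos ha0 _
  have hSlow : (boydS Λ p e 1 - ((a^e :ℝ):ℂ) • 1).PosSemidef := by
    rw [hSeq]; exact (le_cdg_iff _ _ _).mpr hκlow
  have hSup : (((1:ℝ):ℂ) • 1 - boydS Λ p e 1).PosSemidef := by
    rw [hSeq]; exact (cdg_le_iff _ _ _).mpr hκup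
  have hSh : (boydS Λ p e 1).IsHermitian := by
    rw [hSeq]; exact cdg_herm _ _
  have hτlow : ∀ i, a^e ≤ hSh.eigenvalues i := (herm_ge_iff hSh _).mp hSlow
  have hτup : ∀ i, hSh.eigenvalues i ≤ 1 := (herm_le_iff hSh _).mp hSup
  have hτpos : ∀ i, 0 < hSh.eigenvalues i := fun i => lt_of_lt_of_le hae0 (hτlow i)
  -- mpow of 1
  have h1h : (1 : Matrix (Fin d) (Fin d) ℂ).IsHermitian := Matrix.isHermitian_one
  have h1eig : ∀ i, h1h.eigenvalues i = 1 := by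
    have hle := (herm_le_iff h1h 1).mp (by
      rw [show (((1:ℝ):ℂ) • (1 : Matrix (Fin d) (Fin d) ℂ) - 1) = 0 by norm_num]
      exact Matrix.PosSemidef.zero)
    have hge := (herm_ge_iff h1h 1).mp (by
      rw [show ((1 : Matrix (Fin d) (Fin d) ℂ) - ((1:ℝ):ℂ) • 1) = 0 by norm_num]
      exact Matrix.PosSemidef.zero)
    exact fun i => le_antisymm (hle i) (hge i)
  have hmpow1 : mpow (1 : Matrix (Fin d) (Fin d) ℂ) (-(1/2)) = 1 := by
    rw [mpow_eq h1h]
    have h1 : (fun i => h1h.eigenvalues i ^ (-(1/2):ℝ)) = fun _ => (1:ℝ) := by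
      funext i; rw [h1eig i, Real.one_rpow]
    rw [h1, cdg_smul_one]
    norm_num
  -- term 1
  have hterm1 : mpow (1 : Matrix (Fin d) (Fin d) ℂ) (-(1/2)) * boydS Λ p e 1 *
      mpow (1 : Matrix (Fin d) (Fin d) ℂ) (-(1/2)) = boydS Λ p e 1 := by
    rw [hmpow1, Matrix.one_mul, Matrix.mul_one]
  have hlog1 : Real.log (sNorm ∞ (boydS Λ p e 1)) ≤ 0 := by
    apply Real.log_nonpos (sNorm_inf_nonneg _)
    rw [sNorm_inf_le_iff _ zero_le_one]
    rw [show (boydS Λ p e 1)ᴴ = boydS Λ p e 1 from hSh]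
    rw [hSeq, cdg_mul]
    exact (cdg_le_iff _ _ _).mpr fun i => by nlinarith [hκlow i, hκup i, hae0]
  -- term 2
  have hterm2 : mpow (boydS Λ p e 1) (-(1/2)) * 1 * mpow (boydS Λ p e 1) (-(1/2))
      = cdg hSh.eigenvectorUnitary (fun i => (hSh.eigenvalues i)⁻¹) := by
    rw [Matrix.mul_one, mpow_eq hSh, cdg_mul]
    have hfun : (fun i => hSh.eigenvalues i ^ (-(1/2):ℝ) * hSh.eigenvalues i ^ (-(1/2):ℝ))
        = fun i => (hSh.eigenvalues i)⁻¹ := by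
      funext i
      rw [← Real.rpow_add (hτpos i), show (-(1/2) + -(1/2) : ℝ) = -1 by norm_num,
        Real.rpow_neg_one]
    rw [hfun]
  have hb : a ^ e = N ^ (-((p-1) * e)) := by
    rw [ha, ← Real.rpow_mul (inv_nonneg.mpr hN.le), Real.inv_rpow hN.le,
      ← Real.rpow_neg hN.le]
  have hlog2 : Real.log (sNorm ∞ (cdg hSh.eigenvectorUnitary
      (fun i => (hSh.eigenvalues i)⁻¹))) ≤ (p-1) * e * Real.log N := by
    have hNt : (0:ℝ) < N ^ ((p-1)*e) := Real.rpow_pos_of_pos hN _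
    have hboundY : sNorm ∞ (cdg hSh.eigenvectorUnitary (fun i => (hSh.eigenvalues i)⁻¹))
        ≤ N ^ ((p-1)*e) := by
      rw [sNorm_inf_le_iff _ hNt.le]
      rw [show (cdg hSh.eigenvectorUnitary (fun i => (hSh.eigenvalues i)⁻¹))ᴴ
        = cdg hSh.eigenvectorUnitary (fun i => (hSh.eigenvalues i)⁻¹) from cdg_herm _ _]
      rw [cdg_mul]
      refine (cdg_le_iff _ _ _).mpr fun i => ?_
      have h1 : (hSh.eigenvalues i)⁻¹ ≤ N ^ ((p-1)*e) := by
        have h2 := inv_anti₀ hae0 (hτlow i)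
        rw [hb, Real.rpow_neg hN.le, inv_inv] at h2
        exact h2
      have h2 : 0 ≤ (hSh.eigenvalues i)⁻¹ := inv_nonneg.mpr (hτpos i).le
      nlinarith
    rcases le_or_gt (sNorm ∞ (cdg hSh.eigenvectorUnitary
        (fun i => (hSh.eigenvalues i)⁻¹))) 1 with hc1 | hc1
    · exact le_trans (Real.log_nonpos (sNorm_inf_nonneg _) hc1) (mul_nonneg ht0 hlogN)
    · calc Real.log _ ≤ Real.log (N ^ ((p-1)*e)) :=
            Real.log_le_log (lt_trans zero_lt_one hc1) hboundY
        _ = (p-1) * e * Real.log N := Real.log_rpow hN _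
  constructor
  · unfold dH
    rw [hterm1, hterm2]
    linarith [add_le_add hlog1 hlog2]
  · nlinarith [ht1, ht0, hlogN]

end
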